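/- Let 0 < m₂ ≤ a ≤ m₁ < M₁ ≤ b ≤ M₂, let v ≥ 1, and let f : (0,∞) → (0,∞) be increasing and concave. Set C = (m₂^{1-v}·M₂^v)/((1-v)·m₂ + v·M₂). Then f(a^{1-v}·b^v) ≤ f(C·a)^{1-v}·f(C·b)^v. -/
import Mathlib

-- key ratio lemma: monotonicity of t^v/(1+v(t-1)) on [1,∞)
lemma key_ratio {v : ℝ} (hv : 1 ≤ v) {t s : ℝ} (ht : 1 ≤ t) (hts : t ≤ s) :
    t ^ v * (1 + v * (s - 1)) ≤ s ^ v * (1 + v * (t - 1)) := by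
  have hv0 : (0:ℝ) < v := lt_of_lt_of_le one_pos hv
  have hden : ∀ x : ℝ, 1 ≤ x → (0:ℝ) < 1 + v * (x - 1) := by
    intro x hx; nlinarith
  have hg : ∀ x : ℝ, 1 < x → HasDerivAt (fun y : ℝ => y ^ v / (1 + v * (y - 1)))
      ((v * x ^ (v - 1) * (1 + v * (x - 1)) - x ^ v * v) / (1 + v * (x - 1)) ^ 2) x := by
    intro x hx1
    have hx0 : (0:ℝ) < x := lt_trans one_pos hx1
    have h1 : HasDerivAt (fun y : ℝ => y ^ v) (v * x ^ (v - 1)) x :=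
      Real.hasDerivAt_rpow_const (Or.inl hx0.ne')
    have h2 : HasDerivAt (fun y : ℝ => 1 + v * (y - 1)) v x := by
      simpa using (((hasDerivAt_id x).sub_const 1).const_mul v).const_add 1
    exact h1.div h2 (hden x hx1.le).ne'
  have hmono : MonotoneOn (fun x : ℝ => x ^ v / (1 + v * (x - 1))) (Set.Ici 1) := by
    apply monotoneOn_of_deriv_nonneg (convex_Ici 1)
    · apply ContinuousOn.div
      · exact (continuousOn_id.rpow_const (fun x hx => Or.inl (by
          have : (1:ℝ) ≤ x := hx
          positivity)))
      · fun_prop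
      · intro x hx; exact (hden x hx).ne'
    · intro x hx
      rw [interior_Ici] at hx
      exact (hg x hx).differentiableAt.differentiableWithinAt
    · intro x hx
      rw [interior_Ici] at hx
      have hx1 : (1:ℝ) < x := hx
      have hx0 : (0:ℝ) < x := lt_trans one_pos hx1
      rw [(hg x hx1).deriv]
      have hxv : x ^ v = x ^ (v - 1) * x := by
        rw [← Real.rpow_add_one hx0.ne' (v - 1)]; ring_nf
      have hxpow : (0:ℝ) ≤ x ^ (v - 1) := (Real.rpow_pos_of_pos hx0 _).le
      apply div_nonneg _ (sq_nonneg _)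
      rw [hxv]
      have heq : v * x ^ (v - 1) * (1 + v * (x - 1)) - x ^ (v - 1) * x * v
          = v * x ^ (v - 1) * ((v - 1) * (x - 1)) := by ring
      rw [heq]
      have := mul_nonneg (sub_nonneg.2 hv) (sub_nonneg.2 hx1.le)
      positivity
  have := hmono (Set.mem_Ici.2 ht) (Set.mem_Ici.2 (le_trans ht hts)) hts
  rw [div_le_div_iff₀ (hden t ht) (hden s (le_trans ht hts))] at this
  linarith

-- reverse Jensen for concave f, weight v ≥ 1
lemma rev_jensen_concave {f : ℝ → ℝ} {s : Set ℝ} (hconc : ConcaveOn ℝ s f)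
    {x y v : ℝ} (hv : 1 ≤ v) (hx : x ∈ s) (hz : (1 - v) * x + v * y ∈ s) :
    f ((1 - v) * x + v * y) ≤ (1 - v) * f x + v * f y := by
  have hv0 : (0:ℝ) < v := lt_of_lt_of_le one_pos hv
  have hi : (0:ℝ) ≤ v⁻¹ := by positivity
  have hi1 : (0:ℝ) ≤ 1 - v⁻¹ := by
    have : v⁻¹ ≤ 1 := by rw [inv_le_one_iff₀]; right; exact hv
    linarith
  have hy : v⁻¹ * ((1 - v) * x + v * y) + (1 - v⁻¹) * x = y := by
    field_simp; ring
  have key := hconc.2 hz hx hi hi1 (by ring)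
  simp only [smul_eq_mul] at key
  rw [hy] at key
  -- key : v⁻¹ * f z + (1-v⁻¹) * f x ≤ f y
  have h2 : f ((1 - v) * x + v * y) + (v - 1) * f x ≤ v * f y := by
    have := mul_le_mul_of_nonneg_left key hv0.le
    field_simp at this
    nlinarith [this]
  linarith

-- reverse Jensen for convex f (universal)
lemma rev_jensen_convex {f : ℝ → ℝ} (hconv : ConvexOn ℝ Set.univ f)
    {x y v : ℝ} (hv : 1 ≤ v) :
    (1 - v) * f x + v * f y ≤ f ((1 - v) * x + v * y) := by
  have hv0 : (0:ℝ) < v := lt_of_lt_of_le one_pos hv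
  have hi : (0:ℝ) ≤ v⁻¹ := by positivity
  have hi1 : (0:ℝ) ≤ 1 - v⁻¹ := by
    have : v⁻¹ ≤ 1 := by rw [inv_le_one_iff₀]; right; exact hv
    linarith
  have hy : v⁻¹ * ((1 - v) * x + v * y) + (1 - v⁻¹) * x = y := by
    field_simp; ring
  have key := hconv.2 (Set.mem_univ ((1 - v) * x + v * y)) (Set.mem_univ x) hi hi1 (by ring)
  simp only [smul_eq_mul] at key
  rw [hy] at key
  have := mul_le_mul_of_nonneg_left key hv0.le
  field_simp at this
  nlinarith [this]

-- reverse AM-GM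
lemma rev_amgm {p q v : ℝ} (hp : 0 < p) (hq : 0 < q) (hv : 1 ≤ v) :
    (1 - v) * p + v * q ≤ p ^ (1 - v) * q ^ v := by
  have h := rev_jensen_convex convexOn_exp hv (x := Real.log p) (y := Real.log q)
  rw [Real.exp_log hp, Real.exp_log hq] at h
  calc (1 - v) * p + v * q ≤ Real.exp ((1 - v) * Real.log p + v * Real.log q) := h
    _ = p ^ (1 - v) * q ^ v := by
        rw [Real.exp_add, Real.rpow_def_of_pos hp, Real.rpow_def_of_pos hq]
        ring_nf

theorem concave_mono_geometric_extended (m₁ m₂ M₁ M₂ a b v : ℝ)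
    (hm₂ : 0 < m₂) (h1 : m₂ ≤ a) (h2 : a ≤ m₁) (h3 : m₁ < M₁) (h4 : M₁ ≤ b) (h5 : b ≤ M₂)
    (hv : 1 ≤ v) (f : ℝ → ℝ)
    (hfpos : ∀ t ∈ Set.Ioi (0:ℝ), 0 < f t)
    (hinc : MonotoneOn f (Set.Ioi 0)) (hconc : ConcaveOn ℝ (Set.Ioi 0) f) :
    f (a ^ (1 - v) * b ^ v)
      ≤ f ((m₂ ^ (1 - v) * M₂ ^ v / ((1 - v) * m₂ + v * M₂)) * a) ^ (1 - v) *
        f ((m₂ ^ (1 - v) * M₂ ^ v / ((1 - v) * m₂ + v * M₂)) * b) ^ v := by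
  have hv0 : (0:ℝ) < v := lt_of_lt_of_le one_pos hv
  have ha : 0 < a := lt_of_lt_of_le hm₂ h1
  have hab : a < b := lt_of_le_of_lt h2 (lt_of_lt_of_le h3 h4)
  have hb : 0 < b := lt_trans ha hab
  have hM₂ : 0 < M₂ := lt_of_lt_of_le hb h5
  have hm₂M₂ : m₂ < M₂ := lt_of_le_of_lt h1 (lt_of_lt_of_le hab h5)
  set D : ℝ := (1 - v) * a + v * b with hD
  set D₂ : ℝ := (1 - v) * m₂ + v * M₂ with hD₂
  have hDpos : 0 < D := by rw [hD]; nlinarith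
  have hD₂pos : 0 < D₂ := by rw [hD₂]; nlinarith
  set C : ℝ := m₂ ^ (1 - v) * M₂ ^ v / D₂ with hC
  have hCpos : 0 < C := by
    rw [hC]
    exact div_pos (mul_pos (Real.rpow_pos_of_pos hm₂ _) (Real.rpow_pos_of_pos hM₂ _)) hD₂pos
  -- step A : a^(1-v)*b^v ≤ C * D
  have stepA : a ^ (1 - v) * b ^ v ≤ C * D := by
    have ht : (1:ℝ) ≤ b / a := (one_le_div ha).2 hab.le
    have hts : b / a ≤ M₂ / m₂ := div_le_div₀ hM₂.le h5 hm₂ h1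
    have key := key_ratio hv ht hts
    rw [Real.div_rpow hb.le ha.le, Real.div_rpow hM₂.le hm₂.le] at key
    have e1 : 1 + v * (M₂ / m₂ - 1) = D₂ / m₂ := by rw [hD₂]; field_simp; ring
    have e2 : 1 + v * (b / a - 1) = D / a := by rw [hD]; field_simp; ring
    rw [e1, e2, div_mul_div_comm, div_mul_div_comm,
      div_le_div_iff₀ (by positivity) (by positivity)] at key
    -- key : b^v * D₂ * (m₂^v * a) ≤ M₂^v * D * (a^v * m₂)
    rw [hC, Real.rpow_sub ha, Real.rpow_sub hm₂, Real.rpow_one, Real.rpow_one]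
    rw [div_mul_eq_mul_div, div_mul_eq_mul_div, div_mul_eq_mul_div, div_mul_eq_mul_div, div_div,
      div_le_div_iff₀ (by positivity) (by positivity)]
    nlinarith [key]
  -- memberships
  have hCa : C * a ∈ Set.Ioi (0:ℝ) := by simp [Set.mem_Ioi]; positivity
  have hCb : C * b ∈ Set.Ioi (0:ℝ) := by simp [Set.mem_Ioi]; positivity
  have hCD : C * D ∈ Set.Ioi (0:ℝ) := by simp [Set.mem_Ioi]; positivity
  have hgeo : a ^ (1 - v) * b ^ v ∈ Set.Ioi (0:ℝ) := by
    simp [Set.mem_Ioi]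
    exact mul_pos (Real.rpow_pos_of_pos ha _) (Real.rpow_pos_of_pos hb _)
  -- step 1 : monotone
  have s1 : f (a ^ (1 - v) * b ^ v) ≤ f (C * D) := hinc hgeo hCD stepA
  -- step 2 : reverse Jensen
  have hzeq : C * D = (1 - v) * (C * a) + v * (C * b) := by rw [hD]; ring
  have s2 : f (C * D) ≤ (1 - v) * f (C * a) + v * f (C * b) := by
    rw [hzeq]
    exact rev_jensen_concave hconc hv hCa (by rw [← hzeq]; exact hCD)
  -- step 3 : reverse AM-GM
  have s3 : (1 - v) * f (C * a) + v * f (C * b)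
      ≤ f (C * a) ^ (1 - v) * f (C * b) ^ v :=
    rev_amgm (hfpos _ hCa) (hfpos _ hCb) hv
  calc f (a ^ (1 - v) * b ^ v) ≤ f (C * D) := s1
    _ ≤ (1 - v) * f (C * a) + v * f (C * b) := s2
    _ ≤ f (C * a) ^ (1 - v) * f (C * b) ^ v := s3
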